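/- Let $\mu$ be a non-uniform Bernoulli measure on $\Sigma = \{1,\ldots,K\}^{\mathbb{N}}$ with entropy $h_\mu$ and variance $\rho_\mu > 0$, and let $g : \mathbb{N} \to [1,\infty)$ satisfy $\limsup_{n\to\infty} g(n)/\sqrt{\log\log n} \leq 1$ and $g(n) \to \infty$. Define $n_k = \max\{n \geq 1 : g(n)^2 < k\} + 1$. Then, assuming the large-deviation estimate $\mu(\{\mathbf{i} : \log\mu([\mathbf{i}|_1^n]) + h_\mu n \geq \sqrt{\rho_\mu} a_n \sqrt{n}\}) = e^{-a_n^2(1+\zeta_n)/2}$ with $\zeta_n \to 0$ and $a_n = \sqrt{2}g(n)/2$, one has $\sum_{k=1}^\infty \mu\left(\left\{\mathbf{i} : \frac{\log\mu([\mathbf{i}|_1^{n_k}]) + h_\mu n_k}{\sqrt{2\rho_\mu n_k}\, g(n_k)} \geq \frac{1}{2}\right\}\right) < \infty$, and hence $\mu$-almost every $\mathbf{i}$ satisfies $\limsup_{k\to\infty} \frac{\log\mu([\mathbf{i}|_1^{n_k}]) + h_\mu n_k}{\sqrt{2\rho_\mu n_k}\, g(n_k)} \leq \frac{1}{2}$.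 -/
import Mathlib


noncomputable section
open MeasureTheory Real Filter

/-- Logarithm with the convention `log x = 0` whenever `x ≤ 1`. -/
def plog (x : ℝ) : ℝ := if x ≤ 1 then 0 else Real.log x

/-- The cylinder `[i|₁ⁿ]` determined by the first `n` symbols of the sequence `i`. -/
def cylSeq {K : ℕ} (i : ℕ → Fin K) (n : ℕ) : Set (ℕ → Fin K) :=
  {j | ∀ m < n, j m = i m}

set_option maxHeartbeats 1000000 in
/-- For a non-uniform Bernoulli measure `μ` with entropy `h_μ` and variance `ρ_μ > 0`,
`g` with `limsup g(n)/√(loglog n) ≤ 1` and `g → ∞`, and `n_k = max{n ≥ 1 : g(n)² < k} + 1`,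
assuming the large-deviation estimate of Theorem 9.4 of Billingsley with
`a_n = √2 g(n)/2`, the series
`∑_k μ({i : (log μ([i|₁^{n_k}]) + h_μ n_k)/(√(2ρ_μ n_k) g(n_k)) ≥ 1/2})` converges,
and hence for `μ`-a.e. `i` the corresponding `limsup` over `k` is at most `1/2`. -/
theorem stmt15 {K : ℕ} (p : Fin K → ℝ) (hp : ∀ a, 0 < p a) (hpsum : ∑ a, p a = 1)
    (hnonunif : ∃ a, p a ≠ 1 / K)
    (μ : Measure (ℕ → Fin K)) [IsProbabilityMeasure μ]
    (hber : ∀ w : List (Fin K), μ {j | ∀ m : Fin w.length, j (m : ℕ) = w.get m}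
      = ENNReal.ofReal ((w.map p).prod))
    (hEnt ρμ : ℝ)
    (hhEnt : hEnt = -∑ a, p a * Real.log (p a))
    (hρμ : ρμ = ∑ a, p a * (Real.log (p a)) ^ 2 - (∑ a, p a * Real.log (p a)) ^ 2)
    (g : ℕ → ℝ) (hg1 : ∀ n, 1 ≤ g n)
    (hglim : Filter.limsup (fun n : ℕ => g n / Real.sqrt (plog (plog n))) atTop ≤ 1)
    (hgtop : Tendsto g atTop atTop)
    (nk : ℕ → ℕ)
    (hnk : ∀ k : ℕ, nk k = sSup {n : ℕ | 1 ≤ n ∧ (g n) ^ 2 < (k : ℝ)} + 1)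
    (a : ℕ → ℝ) (ha : ∀ n, a n = Real.sqrt 2 * g n / 2)
    (ζ : ℕ → ℝ) (hζ : Tendsto ζ atTop (nhds 0))
    (hLD : ∀ n : ℕ,
      μ {i | Real.sqrt ρμ * (a n * Real.sqrt n)
              ≤ Real.log ((μ (cylSeq i n)).toReal) + hEnt * n}
        = ENNReal.ofReal (exp (-(a n) ^ 2 * (1 + ζ n) / 2))) :
    Summable (fun k : ℕ =>
      (μ {i | (1 : ℝ) / 2
          ≤ (Real.log ((μ (cylSeq i (nk k))).toReal) + hEnt * nk k)
              / (Real.sqrt (2 * ρμ * nk k) * g (nk k))}).toReal) ∧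
    ∀ᵐ i ∂μ, Filter.limsup (fun k : ℕ =>
        (Real.log ((μ (cylSeq i (nk k))).toReal) + hEnt * nk k)
          / (Real.sqrt (2 * ρμ * nk k) * g (nk k))) atTop ≤ 1 / 2 := by
  classical
  -- limsup helper: if eventually u n ≤ 1/2 then limsup u atTop ≤ 1/2
  have limsup_half : ∀ u : ℕ → ℝ, (∀ᶠ n in atTop, u n ≤ 1 / 2) →
      Filter.limsup u atTop ≤ 1 / 2 := by
    intro u hu
    rw [Filter.limsup_eq]
    by_cases hbd : BddBelow {a : ℝ | ∀ᶠ n in atTop, u n ≤ a}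
    · exact csInf_le hbd hu
    · rw [csInf_of_not_bddBelow hbd, Real.sInf_empty]; norm_num
  rcases le_or_gt ρμ 0 with hρ | hρ
  · -- degenerate case: denominator is zero, ratios are 0
    have hzero : ∀ k i, (Real.log ((μ (cylSeq i (nk k))).toReal) + hEnt * nk k)
        / (Real.sqrt (2 * ρμ * nk k) * g (nk k)) = 0 := by
      intro k i
      have h0 : Real.sqrt (2 * ρμ * nk k) = 0 := by
        rw [Real.sqrt_eq_zero']
        have : (2 : ℝ) * ρμ ≤ 0 := by linarith
        exact mul_nonpos_of_nonpos_of_nonneg this (Nat.cast_nonneg _)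
      rw [h0, zero_mul, div_zero]
    constructor
    · have : ∀ k : ℕ, (μ {i | (1 : ℝ) / 2
          ≤ (Real.log ((μ (cylSeq i (nk k))).toReal) + hEnt * nk k)
              / (Real.sqrt (2 * ρμ * nk k) * g (nk k))}).toReal = 0 := by
        intro k
        have : {i | (1 : ℝ) / 2
            ≤ (Real.log ((μ (cylSeq i (nk k))).toReal) + hEnt * nk k)
                / (Real.sqrt (2 * ρμ * nk k) * g (nk k))} = (∅ : Set (ℕ → Fin K)) := by
          ext i
          simp only [Set.mem_setOf_eq, Set.mem_empty_iff_false, iff_false, not_le,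
            hzero k i]
          norm_num
        rw [this]
        simp
      simpa only [this] using summable_zero
    · filter_upwards with i
      apply limsup_half
      filter_upwards with k
      rw [hzero k i]
      norm_num
  -- main case : ρμ > 0
  have hnk1 : ∀ k, 1 ≤ nk k := fun k => by rw [hnk k]; omega
  have hbdd : ∀ k : ℕ, BddAbove {n : ℕ | 1 ≤ n ∧ (g n) ^ 2 < (k : ℝ)} := by
    intro k
    obtain ⟨N, hN⟩ := (hgtop.eventually_ge_atTop (k : ℝ)).exists_forall_of_atTop
    refine ⟨N, fun m hm => ?_⟩
    by_contra hmN
    push_neg at hmN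
    have h1 : (k : ℝ) ≤ g m := hN m hmN.le
    have h2 : g m ≤ g m ^ 2 := by nlinarith [hg1 m]
    exact absurd hm.2 (by linarith)
  have hgsq : ∀ k : ℕ, (k : ℝ) ≤ g (nk k) ^ 2 := by
    intro k
    by_contra h
    push_neg at h
    have hmem : nk k ∈ {n : ℕ | 1 ≤ n ∧ (g n) ^ 2 < (k : ℝ)} := ⟨hnk1 k, h⟩
    have hle := le_csSup (hbdd k) hmem
    rw [hnk k] at hle
    omega
  have hnktop : Tendsto nk atTop atTop := by
    rw [tendsto_atTop]
    intro N
    rw [eventually_atTop]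
    refine ⟨⌊g (N + 1) ^ 2⌋₊ + 1, fun k hk => ?_⟩
    have hkR : g (N + 1) ^ 2 < (k : ℝ) := by
      calc g (N + 1) ^ 2 < (⌊g (N + 1) ^ 2⌋₊ + 1 : ℕ) := by
            push_cast; exact Nat.lt_floor_add_one _
        _ ≤ (k : ℝ) := by exact_mod_cast hk
    have hmem : N + 1 ∈ {n : ℕ | 1 ≤ n ∧ (g n) ^ 2 < (k : ℝ)} := ⟨by omega, hkR⟩
    have := le_csSup (hbdd k) hmem
    rw [hnk k]
    omega
  -- the sets coincide with the large-deviation sets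
  have hseteq : ∀ k : ℕ, {i : ℕ → Fin K | (1 : ℝ) / 2
      ≤ (Real.log ((μ (cylSeq i (nk k))).toReal) + hEnt * nk k)
          / (Real.sqrt (2 * ρμ * nk k) * g (nk k))}
      = {i : ℕ → Fin K | Real.sqrt ρμ * (a (nk k) * Real.sqrt (nk k))
          ≤ Real.log ((μ (cylSeq i (nk k))).toReal) + hEnt * nk k} := by
    intro k
    have hn0 : (0 : ℝ) < (nk k : ℝ) := by exact_mod_cast hnk1 k
    have hD : 0 < Real.sqrt (2 * ρμ * nk k) * g (nk k) := by
      apply mul_pos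
      · apply Real.sqrt_pos.mpr; positivity
      · linarith [hg1 (nk k)]
    have hEq : (1 : ℝ) / 2 * (Real.sqrt (2 * ρμ * nk k) * g (nk k))
        = Real.sqrt ρμ * (a (nk k) * Real.sqrt (nk k)) := by
      rw [ha (nk k)]
      rw [show (2 : ℝ) * ρμ * (nk k) = 2 * (ρμ * (nk k)) by ring,
        Real.sqrt_mul (by norm_num : (0:ℝ) ≤ 2),
        Real.sqrt_mul hρ.le]
      ring
    ext i
    simp only [Set.mem_setOf_eq]
    rw [le_div_iff₀ hD, hEq]
  -- the measures
  have hmeas : ∀ k : ℕ, μ {i : ℕ → Fin K | (1 : ℝ) / 2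
      ≤ (Real.log ((μ (cylSeq i (nk k))).toReal) + hEnt * nk k)
          / (Real.sqrt (2 * ρμ * nk k) * g (nk k))}
      = ENNReal.ofReal (exp (-(a (nk k)) ^ 2 * (1 + ζ (nk k)) / 2)) := by
    intro k
    rw [hseteq k, hLD (nk k)]
  -- eventual exponential bound
  have hζnk : Tendsto (fun k => ζ (nk k)) atTop (nhds 0) := hζ.comp hnktop
  obtain ⟨k₀, hk₀⟩ := eventually_atTop.mp
    (hζnk.eventually (eventually_ge_nhds (by norm_num : (-1/5 : ℝ) < 0)))
  have hbound : ∀ k ≥ k₀, exp (-(a (nk k)) ^ 2 * (1 + ζ (nk k)) / 2)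
      ≤ exp (-(1/5) * k) := by
    intro k hk
    apply Real.exp_le_exp.mpr
    have hζk : -1/5 ≤ ζ (nk k) := hk₀ k hk
    have hak : (a (nk k)) ^ 2 = g (nk k) ^ 2 / 2 := by
      rw [ha (nk k)]
      rw [div_pow, mul_pow, Real.sq_sqrt (by norm_num : (0:ℝ) ≤ 2)]
      ring
    rw [hak]
    have h1 : (k : ℝ) ≤ g (nk k) ^ 2 := hgsq k
    have h2 : (0 : ℝ) ≤ (k : ℝ) := Nat.cast_nonneg _
    nlinarith
  -- summability of the exponential bound
  have hgeom : Summable (fun k : ℕ => exp (-(1/5) * k)) := by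
    have : (fun k : ℕ => exp (-(1/5) * k)) = fun k : ℕ => exp (-(1/5)) ^ k := by
      funext k
      rw [← Real.exp_nat_mul]
      ring_nf
    rw [this]
    exact summable_geometric_of_lt_one (Real.exp_nonneg _)
      (Real.exp_lt_one_iff.mpr (by norm_num))
  have hsum : Summable (fun k : ℕ => exp (-(a (nk k)) ^ 2 * (1 + ζ (nk k)) / 2)) := by
    rw [← summable_nat_add_iff k₀]
    apply Summable.of_nonneg_of_le (fun n => Real.exp_nonneg _)
      (fun n => hbound (n + k₀) (Nat.le_add_left _ _))
    exact (summable_nat_add_iff k₀).mpr hgeom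
  have htoReal : (fun k : ℕ => (μ {i : ℕ → Fin K | (1 : ℝ) / 2
      ≤ (Real.log ((μ (cylSeq i (nk k))).toReal) + hEnt * nk k)
          / (Real.sqrt (2 * ρμ * nk k) * g (nk k))}).toReal)
      = fun k : ℕ => exp (-(a (nk k)) ^ 2 * (1 + ζ (nk k)) / 2) := by
    funext k
    rw [hmeas k, ENNReal.toReal_ofReal (Real.exp_nonneg _)]
  constructor
  · rw [htoReal]
    exact hsum
  · -- Borel–Cantelli
    have htsum : (∑' k : ℕ, μ {i : ℕ → Fin K | (1 : ℝ) / 2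
        ≤ (Real.log ((μ (cylSeq i (nk k))).toReal) + hEnt * nk k)
            / (Real.sqrt (2 * ρμ * nk k) * g (nk k))}) ≠ ⊤ := by
      have : (∑' k : ℕ, μ {i : ℕ → Fin K | (1 : ℝ) / 2
          ≤ (Real.log ((μ (cylSeq i (nk k))).toReal) + hEnt * nk k)
              / (Real.sqrt (2 * ρμ * nk k) * g (nk k))})
          = ENNReal.ofReal (∑' k : ℕ, exp (-(a (nk k)) ^ 2 * (1 + ζ (nk k)) / 2)) := by
        rw [ENNReal.ofReal_tsum_of_nonneg (fun k => Real.exp_nonneg _) hsum]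
        exact tsum_congr fun k => hmeas k
      rw [this]
      exact ENNReal.ofReal_ne_top
    have hBC := MeasureTheory.ae_eventually_notMem htsum
    filter_upwards [hBC] with i hi
    apply limsup_half
    filter_upwards [hi] with k hk
    simp only [Set.mem_setOf_eq, not_le] at hk
    linarith
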